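/- Let A and B be strongly commuting closed operators on a Hilbert space H, and let ξ ∈ D(AB) ∩ D(A). Then ξ ∈ D(BA) and ABξ = BAξ. -/

import Mathlib

open Filter Topology

variable {H : Type*} [NormedAddCommGroup H] [InnerProductSpace ℂ H] [CompleteSpace H]

/-- A (typically closed, densely defined) operator `A` is affiliated with the von Neumann
algebra `M` if every unitary in the commutant of `M` leaves the domain of `A` invariant and
commutes with `A`. -/
def Affiliated (M : VonNeumannAlgebra H) (A : H →ₗ.[ℂ] H) : Prop :=
  ∀ u : H →L[ℂ] H, u ∈ M.commutant → u ∈ unitary (H →L[ℂ] H) →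
    (∀ ξ : H, ξ ∈ A.domain → u ξ ∈ A.domain) ∧
    ∀ (ξ : A.domain) (h : u ↑ξ ∈ A.domain), A ⟨u ↑ξ, h⟩ = u (A ξ)

/-- Two operators commute strongly if the von Neumann algebras they generate commute;
equivalently, there exist commuting von Neumann algebras `M`, `N` with `A` affiliated
with `M` and `B` affiliated with `N`. -/
def StronglyCommutes (A B : H →ₗ.[ℂ] H) : Prop :=
  ∃ M N : VonNeumannAlgebra H,
    (∀ x ∈ M, ∀ y ∈ N, Commute x y) ∧ Affiliated M A ∧ Affiliated N B

lemma isClosed_centralizer (S : Set (H →L[ℂ] H)) : IsClosed (Set.centralizer S) := by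
  have h : Set.centralizer S = ⋂ m ∈ S, {x : H →L[ℂ] H | m * x = x * m} := by
    ext x; simp [Set.mem_centralizer_iff]
  rw [h]
  exact isClosed_biInter fun m _ => isClosed_eq (by continuity) (by continuity)

lemma vna_isClosed (W : VonNeumannAlgebra H) : IsClosed (W : Set (H →L[ℂ] H)) := by
  rw [← W.centralizer_centralizer]
  exact isClosed_centralizer _

lemma cfcHom_mem_vna (W : VonNeumannAlgebra H) {X : H →L[ℂ] H} (hX : X ∈ W)
    (ha : IsSelfAdjoint X) (g : C(spectrum ℝ X, ℝ)) : cfcHom ha g ∈ W := by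
  have hclosed : IsClosed (W : Set (H →L[ℂ] H)) := vna_isClosed W
  have htop := polynomialFunctions.topologicalClosure (spectrum ℝ X)
  have hg : g ∈ closure ((polynomialFunctions (spectrum ℝ X)) : Set C(spectrum ℝ X, ℝ)) := by
    rw [← Subalgebra.topologicalClosure_coe, htop]
    trivial
  have hmaps : Set.MapsTo (cfcHom ha (R := ℝ))
      ((polynomialFunctions (spectrum ℝ X)) : Set C(spectrum ℝ X, ℝ)) (W : Set (H →L[ℂ] H)) := by
    intro f hf
    rw [SetLike.mem_coe, ← SetLike.mem_coe, polynomialFunctions_coe] at hf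
    obtain ⟨p, rfl⟩ := hf
    let φ : Polynomial ℝ →ₐ[ℝ] (H →L[ℂ] H) :=
      ((cfcHom ha (R := ℝ)).toAlgHom).comp (Polynomial.toContinuousMapOnAlgHom (spectrum ℝ X))
    have hφ : φ = Polynomial.aeval X := by
      apply Polynomial.algHom_ext
      show cfcHom ha (Polynomial.toContinuousMapOnAlgHom (spectrum ℝ X) Polynomial.X) = _
      rw [Polynomial.toContinuousMapOnAlgHom_apply, Polynomial.toContinuousMapOn_X_eq_restrict_id,
        cfcHom_id ha, Polynomial.aeval_X]
    have : cfcHom ha (Polynomial.toContinuousMapOnAlgHom (spectrum ℝ X) p) = Polynomial.aeval X p := by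
      rw [← hφ]; rfl
    rw [SetLike.mem_coe, this]
    have hmem : Polynomial.aeval X p ∈ Algebra.adjoin ℝ {X} := by
      rw [Algebra.adjoin_singleton_eq_range_aeval]
      exact ⟨p, rfl⟩
    have hle : Algebra.adjoin ℝ {X} ≤ Subalgebra.restrictScalars ℝ W.toStarSubalgebra.toSubalgebra :=
      Algebra.adjoin_le (by simpa using hX)
    exact hle hmem
  have := map_mem_closure (cfcHom_continuous ha) hg hmaps
  rwa [hclosed.closure_eq] at this

lemma cfc_mem_vna (W : VonNeumannAlgebra H) {X : H →L[ℂ] H} (hX : X ∈ W)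
    (ha : IsSelfAdjoint X) {f : ℝ → ℝ} (hf : Continuous f) : cfc f X ∈ W := by
  rw [cfc_apply f X ha hf.continuousOn]
  exact cfcHom_mem_vna W hX ha _

private lemma expand_mul_unitary (y z : H →L[ℂ] H) (h1 : y * z = z * y)
    (h2 : z * z = 1 - y ^ 2) :
    (y - Complex.I • z) * (y + Complex.I • z) = 1 := by
  rw [mul_add, sub_mul, sub_mul, smul_mul_assoc, smul_mul_assoc, mul_smul_comm, mul_smul_comm,
    smul_smul, Complex.I_mul_I, neg_one_smul, h1, h2, sq]
  abel

lemma isSelfAdjoint_mem_span_unitary (W : VonNeumannAlgebra H) {X : H →L[ℂ] H}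
    (hX : X ∈ W) (hsa : IsSelfAdjoint X) :
    X ∈ Submodule.span ℂ {u : H →L[ℂ] H | u ∈ W ∧ u ∈ unitary (H →L[ℂ] H)} := by
  obtain ⟨c, hc⟩ : ∃ c : ℝ, c = ‖X‖ + 1 := ⟨_, rfl⟩
  have hc0 : (0:ℝ) < c := by rw [hc]; positivity
  obtain ⟨X₀, hX₀def⟩ : ∃ y : H →L[ℂ] H, y = ((c : ℂ))⁻¹ • X := ⟨_, rfl⟩
  have hX₀W : X₀ ∈ W := by
    rw [hX₀def, Algebra.smul_def]
    exact mul_mem (W.toStarSubalgebra.algebraMap_mem _) hX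
  have hsa₀ : IsSelfAdjoint X₀ := by
    rw [IsSelfAdjoint, hX₀def, star_smul, hsa.star_eq]
    congr 1
    simp [RCLike.star_def, ← Complex.ofReal_inv]
  have hX' : X = (c : ℂ) • X₀ := by
    rw [hX₀def, smul_smul, mul_inv_cancel₀ (by exact_mod_cast hc0.ne'), one_smul]
  have hnorm₀ : ‖X₀‖ ≤ 1 := by
    rw [hX₀def, norm_smul]
    have h1 : ‖((c:ℂ))⁻¹‖ = c⁻¹ := by
      rw [norm_inv, Complex.norm_real, Real.norm_eq_abs, abs_of_pos hc0]
    rw [h1, inv_mul_le_one₀ hc0]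
    rw [hc]; linarith
  have hspec : ∀ t ∈ spectrum ℝ X₀, 1 - t ^ 2 ≥ 0 := by
    intro t ht
    have h2 := spectrum.norm_le_norm_mul_of_mem ht
    have h3 : ‖(1 : H →L[ℂ] H)‖ ≤ 1 := ContinuousLinearMap.norm_id_le
    have h4 : |t| ≤ 1 := by
      rw [Real.norm_eq_abs] at h2
      nlinarith [norm_nonneg X₀, norm_nonneg (1 : H →L[ℂ] H)]
    nlinarith [abs_nonneg t, sq_abs t]
  have hfc : Continuous (fun t : ℝ => Real.sqrt (1 - t ^ 2)) :=
    Real.continuous_sqrt.comp (continuous_const.sub (continuous_pow 2))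
  obtain ⟨s, hsdef⟩ : ∃ s : H →L[ℂ] H, s = cfc (fun t : ℝ => Real.sqrt (1 - t ^ 2)) X₀ := ⟨_, rfl⟩
  have hsW : s ∈ W := hsdef ▸ cfc_mem_vna W hX₀W hsa₀ hfc
  have hs_sa : IsSelfAdjoint s := hsdef ▸ cfc_predicate _ X₀
  have hcomm : X₀ * s = s * X₀ := by
    have h1 := cfc_mul (R := ℝ) (fun t : ℝ => t) (fun t => Real.sqrt (1 - t ^ 2)) X₀
      continuousOn_id hfc.continuousOn
    have h2 := cfc_mul (R := ℝ) (fun t => Real.sqrt (1 - t ^ 2)) (fun t : ℝ => t) X₀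
      hfc.continuousOn continuousOn_id
    rw [cfc_id' ℝ X₀ hsa₀, ← hsdef] at h1 h2
    rw [← h1, ← h2]
    exact cfc_congr fun t _ => mul_comm _ _
  have hss : s * s = 1 - X₀ ^ 2 := by
    have h1 := cfc_mul (R := ℝ) (fun t => Real.sqrt (1 - t ^ 2))
      (fun t => Real.sqrt (1 - t ^ 2)) X₀ hfc.continuousOn hfc.continuousOn
    rw [← hsdef] at h1
    rw [← h1, cfc_congr (g := fun t : ℝ => 1 - t ^ 2) (fun t ht => Real.mul_self_sqrt (hspec t ht)),
      cfc_sub (fun _ : ℝ => (1:ℝ)) (fun t : ℝ => t ^ 2) X₀ (by fun_prop) (by fun_prop),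
      cfc_pow_id X₀ 2 hsa₀, cfc_const 1 X₀ hsa₀]
    simp
  obtain ⟨u, hudef⟩ : ∃ u : H →L[ℂ] H, u = X₀ + Complex.I • s := ⟨_, rfl⟩
  have hustar : star u = X₀ - Complex.I • s := by
    rw [hudef, star_add, hsa₀.star_eq, star_smul, hs_sa.star_eq, Complex.star_def, Complex.conj_I,
      neg_smul, ← sub_eq_add_neg]
  have huu : star u * u = 1 := by
    rw [hustar, hudef]; exact expand_mul_unitary X₀ s hcomm hss
  have huu' : u * star u = 1 := by
    rw [hustar, hudef]
    have h5 : X₀ + Complex.I • s = X₀ - Complex.I • (-s) := by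
      rw [smul_neg, sub_neg_eq_add]
    have h6 : X₀ - Complex.I • s = X₀ + Complex.I • (-s) := by
      rw [smul_neg, ← sub_eq_add_neg]
    rw [h5, h6]
    exact expand_mul_unitary X₀ (-s) (by rw [mul_neg, neg_mul, hcomm]) (by rw [neg_mul_neg, hss])
  have hu_mem : u ∈ unitary (H →L[ℂ] H) := Unitary.mem_iff.mpr ⟨huu, huu'⟩
  have hu_W : u ∈ W := by
    rw [hudef, Algebra.smul_def]
    exact add_mem hX₀W (mul_mem (W.toStarSubalgebra.algebraMap_mem _) hsW)
  have hsu_mem : star u ∈ unitary (H →L[ℂ] H) := Unitary.star_mem hu_mem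
  have hsu_W : star u ∈ W := star_mem hu_W
  have hX₀eq : X₀ = (2⁻¹ : ℂ) • u + (2⁻¹ : ℂ) • star u := by
    rw [hustar, hudef, ← smul_add]
    have : X₀ + Complex.I • s + (X₀ - Complex.I • s) = (2 : ℂ) • X₀ := by
      rw [two_smul]; abel
    rw [this, smul_smul]
    norm_num
  rw [hX', hX₀eq, smul_add, smul_smul, smul_smul]
  exact Submodule.add_mem _
    (Submodule.smul_mem _ _ (Submodule.subset_span ⟨hu_W, hu_mem⟩))
    (Submodule.smul_mem _ _ (Submodule.subset_span ⟨hsu_W, hsu_mem⟩))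

lemma mem_span_unitary (W : VonNeumannAlgebra H) {T : H →L[ℂ] H} (hT : T ∈ W) :
    T ∈ Submodule.span ℂ {u : H →L[ℂ] H | u ∈ W ∧ u ∈ unitary (H →L[ℂ] H)} := by
  obtain ⟨Y, hYdef⟩ : ∃ y : H →L[ℂ] H, y = (2⁻¹ : ℂ) • (T + star T) := ⟨_, rfl⟩
  obtain ⟨Z, hZdef⟩ : ∃ z : H →L[ℂ] H, z = (-(Complex.I) * 2⁻¹) • (T - star T) := ⟨_, rfl⟩
  have hY_W : Y ∈ W := by
    rw [hYdef, Algebra.smul_def]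
    exact mul_mem (W.toStarSubalgebra.algebraMap_mem _) (add_mem hT (star_mem hT))
  have hZ_W : Z ∈ W := by
    rw [hZdef, Algebra.smul_def]
    exact mul_mem (W.toStarSubalgebra.algebraMap_mem _) (sub_mem hT (star_mem hT))
  have hYsa : IsSelfAdjoint Y := by
    rw [IsSelfAdjoint, hYdef, star_smul, star_add, star_star]
    rw [show star (2⁻¹ : ℂ) = 2⁻¹ by rw [star_inv₀, star_ofNat]]
    rw [add_comm]
  have hZsa : IsSelfAdjoint Z := by
    rw [IsSelfAdjoint, hZdef, star_smul, star_sub, star_star]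
    rw [show star (-(Complex.I) * 2⁻¹ : ℂ) = Complex.I * 2⁻¹ by
      rw [star_mul', star_inv₀, star_ofNat, star_neg, Complex.star_def, Complex.conj_I, neg_neg,
        mul_comm]]
    rw [show star T - T = -(T - star T) by abel, smul_neg, ← neg_smul, neg_mul]
  have hTeq : T = Y + Complex.I • Z := by
    rw [hYdef, hZdef, smul_smul]
    rw [show Complex.I * (-(Complex.I) * 2⁻¹) = (2⁻¹ : ℂ) by
      rw [← mul_assoc, mul_neg, Complex.I_mul_I, neg_neg, one_mul]]
    rw [smul_add, smul_sub, ← add_sub_assoc]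
    rw [show (2⁻¹:ℂ) • T + (2⁻¹:ℂ) • star T + (2⁻¹:ℂ) • T = (2⁻¹ + 2⁻¹ : ℂ) • T + (2⁻¹:ℂ) • star T
      by rw [add_smul]; abel]
    norm_num
  rw [hTeq]
  exact Submodule.add_mem _ (isSelfAdjoint_mem_span_unitary W hY_W hYsa)
    (Submodule.smul_mem _ _ (isSelfAdjoint_mem_span_unitary W hZ_W hZsa))

lemma span_commutes_aux {A : H →ₗ.[ℂ] H} (S : Set (H →L[ℂ] H))
    (hS : ∀ u ∈ S, ∀ x (hx : x ∈ A.domain), ∃ h' : u x ∈ A.domain, A ⟨u x, h'⟩ = u (A ⟨x, hx⟩))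
    {T : H →L[ℂ] H} (hT : T ∈ Submodule.span ℂ S) :
    ∀ x (hx : x ∈ A.domain), ∃ h' : T x ∈ A.domain, A ⟨T x, h'⟩ = T (A ⟨x, hx⟩) := by
  induction hT using Submodule.span_induction with
  | mem u hu => exact hS u hu
  | zero =>
    intro x hx
    refine ⟨by simp [A.domain.zero_mem], ?_⟩
    have : (⟨(0 : H →L[ℂ] H) x, by simp [A.domain.zero_mem]⟩ : A.domain) = 0 := by
      ext; simp
    rw [this, A.map_zero]
    simp
  | add T S _ _ ihT ihS =>
    intro x hx
    obtain ⟨h1, e1⟩ := ihT x hx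
    obtain ⟨h2, e2⟩ := ihS x hx
    have hmem : (T + S) x ∈ A.domain := by
      rw [ContinuousLinearMap.add_apply]; exact A.domain.add_mem h1 h2
    refine ⟨hmem, ?_⟩
    have : (⟨(T + S) x, hmem⟩ : A.domain) = ⟨T x, h1⟩ + ⟨S x, h2⟩ := by
      ext; simp
    rw [this, A.map_add, e1, e2]
    simp
  | smul a T _ ihT =>
    intro x hx
    obtain ⟨h1, e1⟩ := ihT x hx
    have hmem : (a • T) x ∈ A.domain := by
      rw [ContinuousLinearMap.smul_apply]; exact A.domain.smul_mem a h1
    refine ⟨hmem, ?_⟩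
    have : (⟨(a • T) x, hmem⟩ : A.domain) = a • (⟨T x, h1⟩ : A.domain) := by
      ext; simp
    rw [this, A.map_smul, e1]
    simp

lemma affiliated_commutes {M : VonNeumannAlgebra H} {A : H →ₗ.[ℂ] H} (hA : Affiliated M A)
    {T : H →L[ℂ] H} (hT : T ∈ M.commutant) :
    ∀ x (hx : x ∈ A.domain), ∃ h' : T x ∈ A.domain, A ⟨T x, h'⟩ = T (A ⟨x, hx⟩) := by
  refine span_commutes_aux _ ?_ (mem_span_unitary M.commutant hT)
  intro u hu x hx
  obtain ⟨hdom, hcomm⟩ := hA u hu.1 hu.2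
  exact ⟨hdom x hx, hcomm ⟨x, hx⟩ (hdom x hx)⟩

/-- Proposition 1.A.6(a): if `A` and `B` are strongly commuting densely defined closed
operators and `ξ ∈ D(AB) ∩ D(A)`, then `ξ ∈ D(BA)` and `ABξ = BAξ`. -/
theorem stmt5 (A B : H →ₗ.[ℂ] H)
    (hAc : A.IsClosed) (hBc : B.IsClosed)
    (hAd : Dense (A.domain : Set H)) (hBd : Dense (B.domain : Set H))
    (hAB : StronglyCommutes A B)
    (ξ : H) (hξB : ξ ∈ B.domain) (hBξ : B ⟨ξ, hξB⟩ ∈ A.domain) (hξA : ξ ∈ A.domain) :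
    ∃ h' : A ⟨ξ, hξA⟩ ∈ B.domain,
      B ⟨A ⟨ξ, hξA⟩, h'⟩ = A ⟨B ⟨ξ, hξB⟩, hBξ⟩ := by
  classical
  obtain ⟨M, N, hMN, hA, hB⟩ := hAB
  -- the ℓ²-product space and the graph of B inside it
  let e : WithLp 2 (H × H) ≃L[ℂ] H × H := WithLp.prodContinuousLinearEquiv 2 ℂ H H
  let G : Submodule ℂ (WithLp 2 (H × H)) :=
    B.graph.comap (e.toLinearEquiv : WithLp 2 (H × H) →ₗ[ℂ] H × H)
  have hGmem : ∀ v : WithLp 2 (H × H), v ∈ G ↔ e v ∈ B.graph := fun v => Iff.rfl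
  have hGclosed : IsClosed (G : Set (WithLp 2 (H × H))) := by
    have : (G : Set (WithLp 2 (H × H))) = (e : WithLp 2 (H × H) → H × H) ⁻¹' (B.graph : Set (H × H)) := rfl
    rw [this]
    exact hBc.preimage e.continuous
  haveI : CompleteSpace G := hGclosed.completeSpace_coe
  set P := G.orthogonalProjectionOnto with hP
  let Qc : (H × H) →L[ℂ] H × H :=
    (e : WithLp 2 (H × H) →L[ℂ] H × H) ∘L (G.subtypeL ∘L P) ∘L
      (e.symm : H × H →L[ℂ] WithLp 2 (H × H))
  have hQc_apply : ∀ w : H × H, Qc w = e ((P (e.symm w) : WithLp 2 (H × H))) := fun w => rfl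
  -- Q maps into the graph
  have hQgraph : ∀ w : H × H, Qc w ∈ B.graph := by
    intro w
    rw [hQc_apply]
    exact ((hGmem _).mp (P (e.symm w)).2)
  -- Q fixes the graph
  have hQfix : ∀ w ∈ B.graph, Qc w = w := by
    intro w hw
    have hwG : e.symm w ∈ G := by rw [hGmem]; simpa using hw
    rw [hQc_apply]
    have : (P (e.symm w) : WithLp 2 (H × H)) = e.symm w :=
      Submodule.starProjection_eq_self_iff.mpr hwG
    rw [this]; simp
  -- unitaries in N' preserve the graph (componentwise)
  have hUgraph : ∀ u : H →L[ℂ] H, u ∈ N.commutant → u ∈ unitary (H →L[ℂ] H) →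
      ∀ w : H × H, w ∈ B.graph → (u w.1, u w.2) ∈ B.graph := by
    intro u hu1 hu2 w hw
    rw [LinearPMap.mem_graph_iff] at hw ⊢
    obtain ⟨y, hy1, hy2⟩ := hw
    obtain ⟨hdom, hcomm⟩ := hB u hu1 hu2
    refine ⟨⟨u ↑y, hdom ↑y y.2⟩, by simp [hy1], ?_⟩
    rw [hcomm y (hdom ↑y y.2), hy2]
  -- key equivariance of Q under diag unitaries from N'
  have hKey : ∀ u : H →L[ℂ] H, u ∈ N.commutant → u ∈ unitary (H →L[ℂ] H) →
      ∀ w : H × H, Qc (u w.1, u w.2) = (u (Qc w).1, u (Qc w).2) := by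
    intro u hu1 hu2 w
    have hu1' : star u ∈ N.commutant := star_mem hu1
    have hu2' : star u ∈ unitary (H →L[ℂ] H) := Unitary.star_mem hu2
    have hpvG : (P (e.symm w) : WithLp 2 (H × H)) ∈ G := (P (e.symm w)).2
    set a : H := (Qc w).1 with ha
    set b : H := (Qc w).2 with hb
    have hab : (a, b) ∈ B.graph := by rw [ha, hb]; exact hQgraph w
    have hcand : e.symm (u a, u b) ∈ G := by
      rw [hGmem]
      simpa using hUgraph u hu1 hu2 (a, b) hab
    have horto : ∀ g ∈ G,
        inner (𝕜 := ℂ) (e.symm (u w.1, u w.2) - e.symm (u a, u b)) g = 0 := by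
      intro g hgG
      have hg : ((e g).1, (e g).2) ∈ B.graph := by
        have := (hGmem g).mp hgG
        simpa using this
      have hg' : ((star u) (e g).1, (star u) (e g).2) ∈ B.graph :=
        hUgraph (star u) hu1' hu2' _ hg
      have hg'G : e.symm ((star u) (e g).1, (star u) (e g).2) ∈ G := by
        rw [hGmem]; simpa using hg'
      have hdiff : e.symm (u w.1, u w.2) - e.symm (u a, u b)
          = e.symm (u (w.1 - a), u (w.2 - b)) := by
        rw [← map_sub]
        congr 1
        simp [Prod.ext_iff]
      rw [hdiff]
      have hinner : ∀ (x y : H × H),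
          inner (𝕜 := ℂ) (e.symm x) (e.symm y) = inner (𝕜 := ℂ) x.1 y.1 + inner (𝕜 := ℂ) x.2 y.2 := by
        intro x y
        rw [WithLp.prod_inner_apply]
        rfl
      have hgg : g = e.symm ((e g).1, (e g).2) := by simp
      rw [hgg, hinner]
      have had : ∀ (x y : H), inner (𝕜 := ℂ) (u x) y = inner (𝕜 := ℂ) x ((star u) y) := by
        intro x y
        rw [ContinuousLinearMap.star_eq_adjoint, ContinuousLinearMap.adjoint_inner_right]
      rw [had, had]
      have : inner (𝕜 := ℂ) (e.symm w - (P (e.symm w) : WithLp 2 (H × H)))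
          (e.symm ((star u) (e g).1, (star u) (e g).2)) = 0 :=
        Submodule.starProjection_inner_eq_zero (K := G) (e.symm w)
        (e.symm ((star u) (e g).1, (star u) (e g).2)) hg'G
      have hsub : e.symm w - (P (e.symm w) : WithLp 2 (H × H)) = e.symm (w.1 - a, w.2 - b) := by
        have h1 : (P (e.symm w) : WithLp 2 (H × H)) = e.symm (a, b) := by
          rw [ha, hb, hQc_apply]; simp
        rw [h1, ← map_sub]
        rfl
      rw [hsub, hinner] at this
      simpa using this
    have hproj : (P (e.symm (u w.1, u w.2)) : WithLp 2 (H × H)) = e.symm (u a, u b) :=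
      Submodule.eq_starProjection_of_mem_of_inner_eq_zero hcand horto
    rw [hQc_apply, hproj]
    simp
  -- matrix components of Q
  let P11 : H →L[ℂ] H := (ContinuousLinearMap.fst ℂ H H) ∘L Qc ∘L (ContinuousLinearMap.inl ℂ H H)
  let P12 : H →L[ℂ] H := (ContinuousLinearMap.fst ℂ H H) ∘L Qc ∘L (ContinuousLinearMap.inr ℂ H H)
  let P21 : H →L[ℂ] H := (ContinuousLinearMap.snd ℂ H H) ∘L Qc ∘L (ContinuousLinearMap.inl ℂ H H)
  let P22 : H →L[ℂ] H := (ContinuousLinearMap.snd ℂ H H) ∘L Qc ∘L (ContinuousLinearMap.inr ℂ H H)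
  have hdecomp : ∀ w : H × H, Qc w = (P11 w.1 + P12 w.2, P21 w.1 + P22 w.2) := by
    intro w
    have hw : w = ((w.1, (0:H)) : H × H) + ((0:H), w.2) := by simp
    conv_lhs => rw [hw, map_add]
    rfl
  -- the components commute with the diagonal unitaries
  have hcompKey : ∀ u : H →L[ℂ] H, u ∈ N.commutant → u ∈ unitary (H →L[ℂ] H) →
      ∀ T ∈ ({P11, P12, P21, P22} : Set (H →L[ℂ] H)), u * T = T * u := by
    intro u hu1 hu2 T hT
    have h1 : ∀ y : H, Qc (u y, (0:H)) = (u (Qc (y, (0:H))).1, u (Qc (y, (0:H))).2) := by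
      intro y
      simpa using hKey u hu1 hu2 (y, (0:H))
    have h2 : ∀ y : H, Qc ((0:H), u y) = (u (Qc ((0:H), y)).1, u (Qc ((0:H), y)).2) := by
      intro y
      simpa using hKey u hu1 hu2 ((0:H), y)
    simp only [Set.mem_insert_iff, Set.mem_singleton_iff] at hT
    rcases hT with rfl | rfl | rfl | rfl
    · exact ContinuousLinearMap.ext fun y => (congrArg Prod.fst (h1 y)).symm
    · exact ContinuousLinearMap.ext fun y => (congrArg Prod.fst (h2 y)).symm
    · exact ContinuousLinearMap.ext fun y => (congrArg Prod.snd (h1 y)).symm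
    · exact ContinuousLinearMap.ext fun y => (congrArg Prod.snd (h2 y)).symm
  -- the components lie in M'
  have hPmem : ∀ T ∈ ({P11, P12, P21, P22} : Set (H →L[ℂ] H)), T ∈ M.commutant := by
    intro T hT
    rw [VonNeumannAlgebra.mem_commutant_iff]
    intro g hg
    have hspan := mem_span_unitary M hg
    clear hg
    induction hspan using Submodule.span_induction with
    | mem u hu =>
      have huN : u ∈ N.commutant :=
        VonNeumannAlgebra.mem_commutant_iff.mpr fun y hy => (hMN u hu.1 y hy).symm
      exact hcompKey u huN hu.2 T hT
    | zero => simp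
    | add x y _ _ ihx ihy => rw [add_mul, mul_add, ihx, ihy]
    | smul c x _ ihx => rw [smul_mul_assoc, mul_smul_comm, ihx]
  have hdc := fun T hT => affiliated_commutes hA (hPmem T hT)
  obtain ⟨h11, e11⟩ := hdc P11 (by simp) ξ hξA
  obtain ⟨h12, e12⟩ := hdc P12 (by simp) (B ⟨ξ, hξB⟩) hBξ
  obtain ⟨h21, e21⟩ := hdc P21 (by simp) ξ hξA
  obtain ⟨h22, e22⟩ := hdc P22 (by simp) (B ⟨ξ, hξB⟩) hBξ
  have hfix := hQfix (ξ, B ⟨ξ, hξB⟩) (B.mem_graph ⟨ξ, hξB⟩)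
  rw [hdecomp] at hfix
  have c1 : P11 ξ + P12 (B ⟨ξ, hξB⟩) = ξ := congrArg Prod.fst hfix
  have c2 : P21 ξ + P22 (B ⟨ξ, hξB⟩) = B ⟨ξ, hξB⟩ := congrArg Prod.snd hfix
  set a := A ⟨ξ, hξA⟩ with hadef
  set ab := A ⟨B ⟨ξ, hξB⟩, hBξ⟩ with habdef
  have e1 : P11 a + P12 ab = a := by
    have hsum : (⟨P11 ξ, h11⟩ + ⟨P12 (B ⟨ξ, hξB⟩), h12⟩ : A.domain) = ⟨ξ, hξA⟩ :=
      Subtype.ext c1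
    calc P11 a + P12 ab = A ⟨P11 ξ, h11⟩ + A ⟨P12 (B ⟨ξ, hξB⟩), h12⟩ := by rw [e11, e12]
      _ = A (⟨P11 ξ, h11⟩ + ⟨P12 (B ⟨ξ, hξB⟩), h12⟩) := (A.map_add _ _).symm
      _ = a := by rw [hsum]
  have e2 : P21 a + P22 ab = ab := by
    have hsum : (⟨P21 ξ, h21⟩ + ⟨P22 (B ⟨ξ, hξB⟩), h22⟩ : A.domain) = ⟨B ⟨ξ, hξB⟩, hBξ⟩ :=
      Subtype.ext c2
    calc P21 a + P22 ab = A ⟨P21 ξ, h21⟩ + A ⟨P22 (B ⟨ξ, hξB⟩), h22⟩ := by rw [e21, e22]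
      _ = A (⟨P21 ξ, h21⟩ + ⟨P22 (B ⟨ξ, hξB⟩), h22⟩) := (A.map_add _ _).symm
      _ = ab := by rw [hsum]
  have hgr := hQgraph (a, ab)
  rw [hdecomp] at hgr
  rw [show ((P11 (a, ab).1 + P12 (a, ab).2, P21 (a, ab).1 + P22 (a, ab).2) : H × H) = (a, ab)
    from by rw [show ((a, ab) : H × H).1 = a from rfl, show ((a, ab) : H × H).2 = ab from rfl,
      e1, e2]] at hgr
  rw [LinearPMap.mem_graph_iff] at hgr
  obtain ⟨y, hy1, hy2⟩ := hgr
  have h' : a ∈ B.domain := by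
    have : (↑y : H) = a := hy1
    rw [← this]; exact y.2
  refine ⟨h', ?_⟩
  have hya : (⟨a, h'⟩ : B.domain) = y := Subtype.ext hy1.symm
  rw [hya, hy2]
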